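/- Let B₄ be the presented group on generators σ₁, σ₂, σ₃ with the braid relations, and let ψ : B₄ → GL(3, ℤ[t,t⁻¹]) be a homomorphism with ψ(σᵢ) = Mᵢ. Assume ker ψ is contained in the subgroup generated by α = σ₁σ₂σ₃⁻¹σ₁σ₂⁻¹σ₁⁻¹ and β = σ₃σ₁⁻¹. Then ψ is injective if and only if for every m ∈ ℤ, every k ≥ 0, and every choice of exponents i₁, …, i_k ∈ {1, 2, 3} for which the braid word w = θ^m · τ² · (Δτ^{i₁})⋯(Δτ^{i_k}) · Δ · τ² is a non-identity element of B₄, the matrix ψ(w) = t^{4m} · ψ(τ)² ψ(Δ) ψ(τ)^{i₁} ψ(Δ) ⋯ ψ(τ)^{i_k} ψ(Δ) ψ(τ)² is not the identity matrix. -/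

import Mathlib

open LaurentPolynomial

/-- The braid relators of `B₄` in the free group on three generators. -/
def braidRels : Set (FreeGroup (Fin 3)) :=
  { FreeGroup.of 0 * FreeGroup.of 1 * FreeGroup.of 0 *
      (FreeGroup.of 1 * FreeGroup.of 0 * FreeGroup.of 1)⁻¹,
    FreeGroup.of 1 * FreeGroup.of 2 * FreeGroup.of 1 *
      (FreeGroup.of 2 * FreeGroup.of 1 * FreeGroup.of 2)⁻¹,
    FreeGroup.of 0 * FreeGroup.of 2 * (FreeGroup.of 2 * FreeGroup.of 0)⁻¹ }

/-- The braid group `B₄`, presented on `σ₁, σ₂, σ₃` with the braid relations. -/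
abbrev B₄ : Type := PresentedGroup braidRels

/-- The standard generators `σ₁, σ₂, σ₃` of `B₄` (indexed by `Fin 3`). -/
def σ (i : Fin 3) : B₄ := PresentedGroup.of i

/-- `t` in the Laurent polynomial ring `ℤ[t,t⁻¹]`. -/
noncomputable def tt : LaurentPolynomial ℤ := T 1

/-- Reduced Burau matrix of `σ₁`. -/
noncomputable def M₁ : Matrix (Fin 3) (Fin 3) (LaurentPolynomial ℤ) :=
  !![-tt, tt, 0; 0, 1, 0; 0, 0, 1]

/-- Reduced Burau matrix of `σ₂`. -/
noncomputable def M₂ : Matrix (Fin 3) (Fin 3) (LaurentPolynomial ℤ) :=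
  !![1, 0, 0; 1, -tt, tt; 0, 0, 1]

/-- Reduced Burau matrix of `σ₃`. -/
noncomputable def M₃ : Matrix (Fin 3) (Fin 3) (LaurentPolynomial ℤ) :=
  !![1, 0, 0; 0, 1, 0; 0, 1, -tt]

/-- `α = σ₁σ₂σ₃⁻¹σ₁σ₂⁻¹σ₁⁻¹`. -/
def α : B₄ := σ 0 * σ 1 * (σ 2)⁻¹ * σ 0 * (σ 1)⁻¹ * (σ 0)⁻¹

/-- `β = σ₃σ₁⁻¹`. -/
def β : B₄ := σ 2 * (σ 0)⁻¹

/-- `τ = σ₁σ₂σ₃`. -/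
def τ : B₄ := σ 0 * σ 1 * σ 2

/-- `Δ = σ₁σ₂σ₃σ₁σ₂σ₁`. -/
def Δ : B₄ := σ 0 * σ 1 * σ 2 * σ 0 * σ 1 * σ 0

/-- `θ = τ⁴`, the full twist generating the center of `B₄`. -/
def θ : B₄ := τ ^ 4

lemma rel_eq {a b : FreeGroup (Fin 3)} (h : a * b⁻¹ ∈ braidRels) :
    PresentedGroup.mk braidRels a = PresentedGroup.mk braidRels b := by
  have h1 : PresentedGroup.mk braidRels (a * b⁻¹) = 1 :=
    (QuotientGroup.eq_one_iff _).mpr (Subgroup.subset_normalClosure h)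
  rw [map_mul, map_inv] at h1
  exact (mul_inv_eq_one).mp h1

lemma braid_rel1 : σ 0 * σ 1 * σ 0 = σ 1 * σ 0 * σ 1 := by
  have := rel_eq (a := FreeGroup.of 0 * FreeGroup.of 1 * FreeGroup.of 0)
    (b := FreeGroup.of 1 * FreeGroup.of 0 * FreeGroup.of 1) (by left; rfl)
  simpa [σ, PresentedGroup.of, map_mul] using this

lemma braid_rel2 : σ 1 * σ 2 * σ 1 = σ 2 * σ 1 * σ 2 := by
  have := rel_eq (a := FreeGroup.of 1 * FreeGroup.of 2 * FreeGroup.of 1)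
    (b := FreeGroup.of 2 * FreeGroup.of 1 * FreeGroup.of 2) (by right; left; rfl)
  simpa [σ, PresentedGroup.of, map_mul] using this

lemma braid_rel3 : σ 0 * σ 2 = σ 2 * σ 0 := by
  have := rel_eq (a := FreeGroup.of 0 * FreeGroup.of 2)
    (b := FreeGroup.of 2 * FreeGroup.of 0) (by right; right; rfl)
  simpa [σ, PresentedGroup.of, map_mul] using this


lemma R1 (x : B₄) : σ 0 * (σ 1 * (σ 0 * x)) = σ 1 * (σ 0 * (σ 1 * x)) := by
  rw [← mul_assoc, ← mul_assoc, braid_rel1, mul_assoc, mul_assoc]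
lemma R2 (x : B₄) : σ 1 * (σ 2 * (σ 1 * x)) = σ 2 * (σ 1 * (σ 2 * x)) := by
  rw [← mul_assoc, ← mul_assoc, braid_rel2, mul_assoc, mul_assoc]
lemma R3 (x : B₄) : σ 0 * (σ 2 * x) = σ 2 * (σ 0 * x) := by
  rw [← mul_assoc, braid_rel3, mul_assoc]

lemma hΔτ : Δ = τ * (σ 0 * (σ 1 * σ 0)) := by simp only [Δ, τ, mul_assoc]

lemma T0 (x : B₄) : τ * (σ 0 * x) = σ 1 * (τ * x) := by
  simp only [τ, mul_assoc]
  rw [← R3, R1]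
lemma T1 (x : B₄) : τ * (σ 1 * x) = σ 2 * (τ * x) := by
  simp only [τ, mul_assoc]
  rw [R2, R3]

lemma t2' (x : B₄) : τ * (τ * x) = σ 0 * (σ 1 * (σ 0 * (σ 1 * (σ 2 * (σ 1 * x))))) := by
  simp only [τ, mul_assoc]
  rw [← R3, ← R2]

lemma t3' (x : B₄) : τ * (τ * (τ * x)) = σ 0 * (σ 1 * (σ 0 * (Δ * x))) := by
  rw [t2' (τ * x), ← T0 x, ← T1 (σ 0 * x), ← T0 (σ 1 * (σ 0 * x)), hΔτ]
  simp only [mul_assoc]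

lemma hθΔ : Δ ^ 2 = τ ^ 4 := by
  have h3 : τ * (τ * τ) = σ 0 * (σ 1 * (σ 0 * Δ)) := by
    simpa only [mul_one] using t3' 1
  calc Δ ^ 2 = τ * (σ 0 * (σ 1 * (σ 0 * Δ))) := by rw [pow_two, hΔτ]; simp only [mul_assoc]
    _ = τ * (τ * (τ * τ)) := by rw [← h3]
    _ = τ ^ 4 := by simp only [pow_succ, pow_zero, one_mul, mul_assoc]

lemma hβ : β = Δ⁻¹ * τ ^ 2 := by
  have hD2 : Δ * σ 2 = τ ^ 2 * σ 0 := by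
    rw [hΔτ, pow_two]
    simp only [mul_assoc]
    rw [braid_rel3]
    simp only [τ, mul_assoc]
  have : Δ * β = τ ^ 2 := by
    rw [β, ← mul_assoc, hD2, mul_assoc, mul_inv_cancel, mul_one]
  rw [← this, ← mul_assoc, inv_mul_cancel, one_mul]

lemma hα : α = τ ^ 3 * Δ⁻¹ * τ⁻¹ := by
  have h : α * τ = σ 0 * (σ 1 * σ 0) := by
    rw [α, τ]
    simp only [mul_assoc, inv_mul_cancel_left]
    rw [braid_rel3]
    simp only [inv_mul_cancel_left]
  have h2 : α * τ * Δ = τ ^ 3 := by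
    have t3p : τ ^ 3 = σ 0 * (σ 1 * σ 0) * Δ := by
      have := t3' 1
      simp only [mul_one] at this
      rw [pow_succ, pow_two, mul_assoc, this]
      simp only [mul_assoc]
    rw [h, t3p]
  rw [← h2]
  simp only [mul_assoc, mul_inv_cancel_left, mul_inv_cancel, mul_one]

/-! ### Normal forms in the subgroup generated by τ and Δ -/

def gword (l : List ℕ) : B₄ := (l.map fun i => Δ * τ ^ i).prod

lemma gword_nil : gword [] = 1 := rfl
lemma gword_cons (i : ℕ) (l : List ℕ) : gword (i :: l) = Δ * τ ^ i * gword l := by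
  simp [gword]
lemma gword_append (l₁ l₂ : List ℕ) : gword (l₁ ++ l₂) = gword l₁ * gword l₂ := by
  simp [gword]

lemma cθτ : Commute θ τ := by
  rw [θ]; exact (Commute.refl τ).pow_left 4
lemma cθΔ : Commute θ Δ := by
  rw [θ, ← hθΔ]; exact (Commute.refl Δ).pow_left 2
lemma cθg (l : List ℕ) : Commute θ (gword l) := by
  induction l with
  | nil => rw [gword_nil]; exact Commute.one_right θ
  | cons i l ih =>
      rw [gword_cons]
      exact (cθΔ.mul_right (cθτ.pow_right i)).mul_right ih

lemma hθτ4 : θ = τ ^ (4 : ℤ) := by rw [θ]; norm_cast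
lemma tzpow_split (q r : ℤ) : τ ^ (4 * q + r) = θ ^ q * τ ^ r := by
  rw [zpow_add, zpow_mul, ← hθτ4]
lemma hΔΔ : Δ * Δ = θ := by rw [← pow_two, hθΔ, θ]
lemma hΔinv : Δ⁻¹ = θ⁻¹ * Δ := by rw [← hΔΔ]; group

-- pulling θ-powers to the left
lemma pullτ (k a : ℤ) (y : B₄) : τ ^ a * (θ ^ k * y) = θ ^ k * (τ ^ a * y) := by
  rw [← mul_assoc, ((cθτ.zpow_left k).zpow_right a).symm.eq, mul_assoc]
lemma pullτ' (k : ℤ) (y : B₄) : τ * (θ ^ k * y) = θ ^ k * (τ * y) := by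
  rw [← mul_assoc, ← (cθτ.zpow_left k).eq, mul_assoc]
lemma pullτi (k : ℤ) (y : B₄) : τ⁻¹ * (θ ^ k * y) = θ ^ k * (τ⁻¹ * y) := by
  rw [← mul_assoc, ← (cθτ.zpow_left k).inv_right.eq, mul_assoc]
lemma pullτn (k : ℤ) (n : ℕ) (y : B₄) : τ ^ n * (θ ^ k * y) = θ ^ k * (τ ^ n * y) := by
  rw [← mul_assoc, ((cθτ.zpow_left k).pow_right n).symm.eq, mul_assoc]
lemma pullΔ (k : ℤ) (y : B₄) : Δ * (θ ^ k * y) = θ ^ k * (Δ * y) := by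
  rw [← mul_assoc, ← (cθΔ.zpow_left k).eq, mul_assoc]
lemma pullg (k : ℤ) (l : List ℕ) (y : B₄) : gword l * (θ ^ k * y) = θ ^ k * (gword l * y) := by
  rw [← mul_assoc, ← ((cθg l).zpow_left k).eq, mul_assoc]
lemma mergeθ (j k : ℤ) (y : B₄) : θ ^ j * (θ ^ k * y) = θ ^ (j + k) * y := by
  rw [← mul_assoc, ← zpow_add]
lemma mergeθ' (j : ℤ) (y : B₄) : θ ^ j * (θ * y) = θ ^ (j + 1) * y := by
  rw [← mul_assoc, ← zpow_add_one]
lemma mergeτ (j k : ℤ) (y : B₄) : τ ^ j * (τ ^ k * y) = τ ^ (j + k) * y := by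
  rw [← mul_assoc, ← zpow_add]
lemma tpull1 (a : ℤ) (y : B₄) : τ * (τ ^ a * y) = τ ^ (a + 1) * y := by
  rw [← mul_assoc, ← zpow_one_add, add_comm (1:ℤ) a]
lemma tpulli (a : ℤ) (y : B₄) : τ⁻¹ * (τ ^ a * y) = τ ^ (a - 1) * y := by
  rw [← mul_assoc, ← zpow_neg_one, ← zpow_add, add_comm (-1:ℤ) a, ← sub_eq_add_neg]
lemma Δpull (y : B₄) : Δ * (Δ * y) = θ * y := by rw [← mul_assoc, hΔΔ]

/-- normal form `θ^m τ^a (Δτ^{i₁})⋯(Δτ^{i_k}) Δ^e τ^b`. -/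
def NF (m a : ℤ) (l : List ℕ) (e : Bool) (b : ℤ) : B₄ :=
  θ ^ m * (τ ^ a * (gword l * ((cond e Δ 1) * τ ^ b)))

def Entries (l : List ℕ) : Prop := ∀ i ∈ l, i = 1 ∨ i = 2 ∨ i = 3

def Good (g : B₄) : Prop := ∃ m a l e b, Entries l ∧ g = NF m a l e b

lemma good_one : Good 1 :=
  ⟨0, 0, [], false, 0, by intro i h; simp at h, by simp [NF, gword_nil]⟩

lemma good_theta_mul (k : ℤ) {g : B₄} (h : Good g) : Good (θ ^ k * g) := by
  obtain ⟨m, a, l, e, b, hl, rfl⟩ := h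
  exact ⟨k + m, a, l, e, b, hl, by rw [NF, NF, mergeθ]⟩

lemma good_tau_mul {g : B₄} (h : Good g) : Good (τ * g) := by
  obtain ⟨m, a, l, e, b, hl, rfl⟩ := h
  refine ⟨m, a + 1, l, e, b, hl, ?_⟩
  rw [NF, NF, pullτ' m, tpull1]

lemma good_tauinv_mul {g : B₄} (h : Good g) : Good (τ⁻¹ * g) := by
  obtain ⟨m, a, l, e, b, hl, rfl⟩ := h
  refine ⟨m, a - 1, l, e, b, hl, ?_⟩
  rw [NF, NF, pullτi m, tpulli]

lemma good_Delta_mul {g : B₄} (h : Good g) : Good (Δ * g) := by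
  obtain ⟨m, a, l, e, b, hl, rfl⟩ := h
  obtain ⟨q, r, hqr, hr0, hr4⟩ : ∃ q r : ℤ, a = 4 * q + r ∧ 0 ≤ r ∧ r < 4 :=
    ⟨a / 4, a % 4, (Int.mul_ediv_add_emod a 4).symm, Int.emod_nonneg a (by norm_num),
      Int.emod_lt_of_pos a (by norm_num)⟩
  subst hqr
  have key : Δ * NF m (4 * q + r) l e b = θ ^ (m + q) * (Δ * (τ ^ r * (gword l * ((cond e Δ 1) * τ ^ b)))) := by
    rw [NF, pullΔ, tzpow_split, mul_assoc, pullΔ, mergeθ]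
  interval_cases r
  · -- r = 0
    rw [key]
    cases l with
    | nil =>
        cases e with
        | false =>
            exact ⟨m + q, 0, [], true, b, by intro i h; simp at h,
              by rw [NF]; simp [gword_nil]⟩
        | true =>
            refine ⟨m + q + 1, 0, [], false, b, by intro i h; simp at h, ?_⟩
            rw [NF]
            simp only [gword_nil, zpow_zero, one_mul, cond_true, cond_false]
            rw [Δpull, mergeθ' ]
    | cons i l' =>
        refine ⟨m + q + 1, (i : ℤ), l', e, b, fun j hj => hl j (List.mem_cons_of_mem i hj), ?_⟩
        rw [NF]
        simp only [zpow_zero, one_mul, gword_cons, zpow_natCast]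
        simp only [mul_assoc, Δpull]
        rw [mergeθ']
  · -- r = 1
    refine ⟨m + q, 0, 1 :: l, e, b, ?_, ?_⟩
    · intro j hj; rcases List.mem_cons.mp hj with h | h; · left; exact h
      exact hl j h
    rw [key, NF]
    simp only [zpow_zero, one_mul, gword_cons, zpow_one, pow_one]
    simp only [mul_assoc]
  · -- r = 2
    refine ⟨m + q, 0, 2 :: l, e, b, ?_, ?_⟩
    · intro j hj; rcases List.mem_cons.mp hj with h | h; · right; left; exact h
      exact hl j h
    rw [key, NF]
    simp only [zpow_zero, one_mul, gword_cons]
    rw [show ((2:ℤ) = ((2:ℕ):ℤ)) by norm_num, zpow_natCast]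
    simp only [mul_assoc]
  · -- r = 3
    refine ⟨m + q, 0, 3 :: l, e, b, ?_, ?_⟩
    · intro j hj; rcases List.mem_cons.mp hj with h | h; · right; right; exact h
      exact hl j h
    rw [key, NF]
    simp only [zpow_zero, one_mul, gword_cons]
    rw [show ((3:ℤ) = ((3:ℕ):ℤ)) by norm_num, zpow_natCast]
    simp only [mul_assoc]

lemma good_Deltainv_mul {g : B₄} (h : Good g) : Good (Δ⁻¹ * g) := by
  rw [hΔinv, mul_assoc, ← zpow_neg_one]
  exact good_theta_mul _ (good_Delta_mul h)

lemma good_list (l : List B₄)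
    (hl : ∀ y ∈ l, y ∈ (({τ, Δ} : Set B₄) ∪ ({τ, Δ} : Set B₄)⁻¹)) : Good l.prod := by
  induction l with
  | nil => simpa using good_one
  | cons y l ih =>
      have hy := hl y List.mem_cons_self
      have hrest : Good l.prod := ih fun z hz => hl z (List.mem_cons_of_mem y hz)
      rw [List.prod_cons]
      rcases hy with hy | hy
      · rcases hy with rfl | hy
        · exact good_tau_mul hrest
        · rw [Set.mem_singleton_iff] at hy; subst hy
          exact good_Delta_mul hrest
      · rw [Set.mem_inv] at hy
        rcases hy with hy | hy
        · have hyy : y = τ⁻¹ := by rw [← hy, inv_inv]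
          subst hyy
          exact good_tauinv_mul hrest
        · rw [Set.mem_singleton_iff] at hy
          have hyy : y = Δ⁻¹ := by rw [← hy, inv_inv]
          subst hyy
          exact good_Deltainv_mul hrest

lemma good_of_mem {g : B₄} (hg : g ∈ Subgroup.closure ({τ, Δ} : Set B₄)) : Good g := by
  have h2 : g ∈ Submonoid.closure (({τ, Δ} : Set B₄) ∪ ({τ, Δ} : Set B₄)⁻¹) := by
    rw [← Subgroup.closure_toSubmonoid]
    exact hg
  obtain ⟨l, hl, rfl⟩ := Submonoid.exists_list_of_mem_closure h2
  exact good_list l hl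

lemma mem_τΔ_α : α ∈ Subgroup.closure ({τ, Δ} : Set B₄) := by
  have hτ : τ ∈ Subgroup.closure ({τ, Δ} : Set B₄) :=
    Subgroup.subset_closure (Set.mem_insert _ _)
  have hΔm : Δ ∈ Subgroup.closure ({τ, Δ} : Set B₄) :=
    Subgroup.subset_closure (Set.mem_insert_of_mem _ rfl)
  rw [hα]
  exact mul_mem (mul_mem (pow_mem hτ 3) (inv_mem hΔm)) (inv_mem hτ)

lemma mem_τΔ_β : β ∈ Subgroup.closure ({τ, Δ} : Set B₄) := by
  have hτ : τ ∈ Subgroup.closure ({τ, Δ} : Set B₄) :=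
    Subgroup.subset_closure (Set.mem_insert _ _)
  have hΔm : Δ ∈ Subgroup.closure ({τ, Δ} : Set B₄) :=
    Subgroup.subset_closure (Set.mem_insert_of_mem _ rfl)
  rw [hβ]
  exact mul_mem (inv_mem hΔm) (pow_mem hτ 2)

/-! ### Conjugating a normal form into the standard form -/

lemma hxinv : (τ ^ (2:ℤ) * Δ)⁻¹ = θ ^ (-2:ℤ) * (Δ * τ ^ (2:ℤ)) := by
  rw [mul_inv_rev, hΔinv]
  have hτ2 : (τ ^ (2:ℤ))⁻¹ = θ⁻¹ * τ ^ (2:ℤ) := by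
    have : τ ^ (2:ℤ) * τ ^ (2:ℤ) = θ := by
      rw [← zpow_add, hθτ4]; norm_num
    rw [← this]; group
  rw [hτ2]
  calc θ⁻¹ * Δ * (θ⁻¹ * τ ^ (2:ℤ)) = θ⁻¹ * (Δ * (θ^(-1:ℤ) * τ ^ (2:ℤ))) := by
        rw [zpow_neg_one]; simp only [mul_assoc]
    _ = θ⁻¹ * (θ^(-1:ℤ) * (Δ * τ ^ (2:ℤ))) := by rw [pullΔ]
    _ = θ ^ (-2:ℤ) * (Δ * τ ^ (2:ℤ)) := by
        rw [← mul_assoc, ← zpow_neg_one, ← zpow_add]; norm_num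

lemma core1 (K : ℤ) (L : List ℕ) (n : ℕ) :
    (τ ^ (2:ℤ) * Δ) * (θ ^ K * (τ ^ (2:ℤ) * (gword L * (Δ * τ ^ n)))) * (τ ^ (2:ℤ) * Δ)⁻¹
      = θ ^ (K - 2) * (τ ^ (2:ℤ) * (gword (2 :: L ++ [n]) * (Δ * τ ^ (2:ℤ)))) := by
  rw [hxinv]
  simp only [mul_assoc, pullτ, pullτn, pullΔ, pullg, mergeθ]
  simp only [gword_cons, gword_append, gword_nil, mul_one, mul_assoc]
  rw [sub_eq_add_neg]
  norm_cast

lemma core0 (K : ℤ) (L : List ℕ) :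
    (τ ^ (2:ℤ) * Δ * τ⁻¹) * (θ ^ K * (τ ^ (2:ℤ) * (gword L * (Δ * τ ^ (0:ℤ))))) * (τ ^ (2:ℤ) * Δ * τ⁻¹)⁻¹
      = θ ^ (K - 2) * (τ ^ (2:ℤ) * (gword (1 :: L ++ [1]) * (Δ * τ ^ (2:ℤ)))) := by
  have hinv : (τ ^ (2:ℤ) * Δ * τ⁻¹)⁻¹ = θ ^ (-2:ℤ) * (τ * (Δ * τ ^ (2:ℤ))) := by
    rw [mul_inv_rev, inv_inv, hxinv, pullτ']
  rw [hinv]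
  simp only [zpow_zero, mul_one, mul_assoc, pullτ, pullτn, pullτ', pullτi, pullΔ, pullg, mergeθ]
  simp only [gword_cons, gword_append, gword_nil, mul_one, mul_assoc, pow_one, zpow_one]
  rw [tpulli, show (2:ℤ) - 1 = 1 by norm_num, zpow_one, sub_eq_add_neg]

lemma conj_conj (a b g : B₄) : (a * b) * g * (a * b)⁻¹ = a * (b * g * b⁻¹) * a⁻¹ := by
  group

lemma stepB (M A c : ℤ) (L : List ℕ) (hL : Entries L) :
    ∃ (x : B₄) (M' : ℤ) (L' : List ℕ), Entries L' ∧
      x * (θ ^ M * (τ ^ A * (gword L * (Δ * τ ^ c)))) * x⁻¹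
        = θ ^ M' * (τ ^ (2:ℤ) * (gword L' * (Δ * τ ^ (2:ℤ)))) := by
  obtain ⟨q, r, hqr, hr0, hr4⟩ : ∃ q r : ℤ, c + (A - 2) = 4 * q + r ∧ 0 ≤ r ∧ r < 4 :=
    ⟨(c + (A - 2)) / 4, (c + (A - 2)) % 4, (Int.mul_ediv_add_emod _ 4).symm,
      Int.emod_nonneg _ (by norm_num), Int.emod_lt_of_pos _ (by norm_num)⟩
  have h1 : τ ^ (2 - A) * (θ ^ M * (τ ^ A * (gword L * (Δ * τ ^ c)))) * (τ ^ (2 - A))⁻¹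
      = θ ^ (M + q) * (τ ^ (2:ℤ) * (gword L * (Δ * τ ^ r))) := by
    rw [← zpow_neg]
    simp only [mul_assoc]
    rw [← zpow_add τ c, show c + -(2 - A) = 4 * q + r from by rw [← hqr]; ring, tzpow_split]
    simp only [pullΔ, pullg, pullτ, mergeθ]
    rw [mergeτ, show (2 - A + A : ℤ) = 2 by ring]
  have entries_ext : ∀ (j : ℕ), j = 1 ∨ j = 2 ∨ j = 3 → Entries (2 :: L ++ [j]) := by
    intro j hj i hi
    rcases List.mem_cons.mp hi with h | h
    · right; left; exact h
    rcases List.mem_append.mp h with h | h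
    · exact hL i h
    · simp at h; subst h; exact hj
  interval_cases r
  · -- r = 0
    refine ⟨(τ ^ (2:ℤ) * Δ * τ⁻¹) * τ ^ (2 - A), M + q - 2, 1 :: L ++ [1], ?_, ?_⟩
    · intro i hi
      rcases List.mem_cons.mp hi with h | h
      · left; exact h
      rcases List.mem_append.mp h with h | h
      · exact hL i h
      · simp at h; subst h; left; rfl
    rw [conj_conj, h1, core0]
  · -- r = 1
    refine ⟨(τ ^ (2:ℤ) * Δ) * τ ^ (2 - A), M + q - 2, 2 :: L ++ [1],
      entries_ext 1 (Or.inl rfl), ?_⟩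
    rw [conj_conj, h1]
    exact_mod_cast core1 (M + q) L 1
  · -- r = 2
    refine ⟨(τ ^ (2:ℤ) * Δ) * τ ^ (2 - A), M + q - 2, 2 :: L ++ [2],
      entries_ext 2 (Or.inr (Or.inl rfl)), ?_⟩
    rw [conj_conj, h1]
    exact_mod_cast core1 (M + q) L 2
  · -- r = 3
    refine ⟨(τ ^ (2:ℤ) * Δ) * τ ^ (2 - A), M + q - 2, 2 :: L ++ [3],
      entries_ext 3 (Or.inr (Or.inr rfl)), ?_⟩
    rw [conj_conj, h1]
    exact_mod_cast core1 (M + q) L 3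

lemma endgame {g : B₄} (hG : Good g) :
    (∃ (M : ℤ) (r : ℕ), r < 4 ∧ g = θ ^ M * τ ^ r) ∨
    (∃ (x : B₄) (M : ℤ) (L : List ℕ), Entries L ∧
      x * g * x⁻¹ = θ ^ M * (τ ^ (2:ℤ) * (gword L * (Δ * τ ^ (2:ℤ))))) := by
  obtain ⟨m, a, l, e, b, hl, rfl⟩ := hG
  cases e with
  | true =>
      right
      have h1 : τ ^ b * NF m a l true b * (τ ^ b)⁻¹
          = θ ^ m * (τ ^ (b + a) * (gword l * (Δ * τ ^ (0:ℤ)))) := by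
        rw [NF, ← zpow_neg]
        simp only [cond_true, mul_assoc]
        rw [← zpow_add τ b, add_neg_cancel, zpow_zero, mul_one, pullτ, mergeτ]
      obtain ⟨x, M', L', hE, hx⟩ := stepB m (b + a) 0 l hl
      exact ⟨x * τ ^ b, M', L', hE, by rw [conj_conj, h1, hx]⟩
  | false =>
      rcases List.eq_nil_or_concat l with rfl | ⟨l₀, i, rfl⟩
      · -- pure power of τ and θ
        left
        obtain ⟨q, r, hqr, hr0, hr4⟩ : ∃ q r : ℤ, a + b = 4 * q + r ∧ 0 ≤ r ∧ r < 4 :=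
          ⟨(a + b) / 4, (a + b) % 4, (Int.mul_ediv_add_emod _ 4).symm,
            Int.emod_nonneg _ (by norm_num), Int.emod_lt_of_pos _ (by norm_num)⟩
        obtain ⟨n, rfl⟩ : ∃ n : ℕ, r = (n : ℤ) := ⟨r.toNat, (Int.toNat_of_nonneg hr0).symm⟩
        refine ⟨m + q, n, by exact_mod_cast hr4, ?_⟩
        rw [NF]
        simp only [gword_nil, cond_false, one_mul, mul_one]
        rw [← zpow_add τ a b, hqr, tzpow_split, mergeθ, zpow_natCast]
      · right
        rw [show l₀.concat i = l₀ ++ [i] from List.concat_eq_append] at hl ⊢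
        have hE0 : Entries l₀ := fun j hj => hl j (List.mem_append_left _ hj)
        have h1 : τ ^ b * NF m a (l₀ ++ [i]) false b * (τ ^ b)⁻¹
            = θ ^ m * (τ ^ (b + a) * (gword l₀ * (Δ * τ ^ ((i:ℕ):ℤ)))) := by
          rw [NF, ← zpow_neg]
          simp only [cond_false, one_mul, gword_append, gword_cons, gword_nil, mul_one,
            mul_assoc, zpow_natCast]
          rw [← zpow_add τ b, add_neg_cancel, zpow_zero, mul_one, pullτ, mergeτ]
        obtain ⟨x, M', L', hE, hx⟩ := stepB m (b + a) i l₀ hE0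
        refine ⟨x * τ ^ b, M', L', hE, ?_⟩
        rw [conj_conj, h1]
        exact_mod_cast hx

/-! ### Matrix computations -/

noncomputable def Nmat : Matrix (Fin 3) (Fin 3) (LaurentPolynomial ℤ) :=
  !![0, 0, -tt^3; 1, 0, -tt^2; 0, 1, -tt]

lemma hM123 : M₁ * M₂ * M₃ = Nmat := by
  rw [M₁, M₂, M₃, Nmat]
  refine Matrix.ext fun i j => ?_
  fin_cases i <;> fin_cases j <;>
    simp [Matrix.mul_apply, Fin.sum_univ_three, Matrix.vecHead, Matrix.vecTail] <;> ring

lemma hNd1 : Nmat 0 0 = 0 := by simp [Nmat]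

lemma hNd2 : (Nmat ^ 2) 0 0 = 0 := by
  simp [Nmat, pow_two, Matrix.mul_apply, Fin.sum_univ_three]

lemma hNd3 : (Nmat ^ 3) 1 1 = 0 := by
  simp [Nmat, pow_succ, pow_two, Matrix.mul_apply, Fin.sum_univ_three]

lemma htt4 : tt ^ 4 = (T 4 : LaurentPolynomial ℤ) := by
  rw [tt, T_pow]; norm_num

lemma hN4 : Nmat ^ 4 = (T 4 : LaurentPolynomial ℤ) • (1 : Matrix (Fin 3) (Fin 3) (LaurentPolynomial ℤ)) := by
  rw [← htt4, Nmat, show (4:ℕ) = 2 + 2 from rfl, pow_add, pow_two]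
  refine Matrix.ext fun i j => ?_
  fin_cases i <;> fin_cases j <;>
    simp [Matrix.mul_apply, Fin.sum_univ_three, Matrix.smul_apply, Matrix.one_apply,
      Matrix.vecHead, Matrix.vecTail, smul_eq_mul] <;> ring

lemma T_eq_one {n : ℤ} (h : (T n : LaurentPolynomial ℤ) = 1) : n = 0 := by
  rw [← T_zero] at h
  have h2 : (Finsupp.single n 1 : ℤ →₀ ℤ) = Finsupp.single 0 1 := congrArg AddMonoidAlgebra.coeff h
  rcases Finsupp.single_eq_single_iff _ _ _ _ |>.mp h2 with ⟨h3, _⟩ | ⟨h3, _⟩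
  · exact h3
  · exact absurd h3 one_ne_zero

lemma wordform_eq (M : ℤ) (L : List ℕ) :
    θ ^ M * τ ^ 2 * gword L * Δ * τ ^ 2
      = θ ^ M * (τ ^ (2:ℤ) * (gword L * (Δ * τ ^ (2:ℤ)))) := by
  have h2 : τ ^ (2:ℤ) = τ ^ (2:ℕ) := by norm_cast
  rw [h2]
  simp only [mul_assoc]


/-- The Burau representation of `B₄` is faithful if and only if, for every `m ∈ ℤ`
and every word `θ^m τ² Δτ^{i₁} ⋯ Δτ^{i_k} Δ τ²` (with `i₁, …, i_k ∈ {1,2,3}`)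
which is a non-identity element of `B₄`, the corresponding matrix
`t^{4m} · ψ(τ)² ψ(Δ) ψ(τ)^{i₁} ψ(Δ) ⋯ ψ(τ)^{i_k} ψ(Δ) ψ(τ)²` is not the identity. -/
theorem burau_faithful_iff
    (ψ : B₄ →* Matrix.GeneralLinearGroup (Fin 3) (LaurentPolynomial ℤ))
    (h₁ : (ψ (σ 0) : Matrix (Fin 3) (Fin 3) (LaurentPolynomial ℤ)) = M₁)
    (h₂ : (ψ (σ 1) : Matrix (Fin 3) (Fin 3) (LaurentPolynomial ℤ)) = M₂)
    (h₃ : (ψ (σ 2) : Matrix (Fin 3) (Fin 3) (LaurentPolynomial ℤ)) = M₃)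
    (hker : ψ.ker ≤ Subgroup.closure ({α, β} : Set B₄)) :
    Function.Injective ψ ↔
      ∀ (m : ℤ) (l : List ℕ), (∀ i ∈ l, i = 1 ∨ i = 2 ∨ i = 3) →
        θ ^ m * τ ^ 2 * (l.map fun i => Δ * τ ^ i).prod * Δ * τ ^ 2 ≠ 1 →
        (T (4 * m) : LaurentPolynomial ℤ) •
            ((ψ τ : Matrix (Fin 3) (Fin 3) (LaurentPolynomial ℤ)) ^ 2 *
              (l.map fun i =>
                (ψ Δ : Matrix (Fin 3) (Fin 3) (LaurentPolynomial ℤ)) *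
                  (ψ τ : Matrix (Fin 3) (Fin 3) (LaurentPolynomial ℤ)) ^ i).prod *
              (ψ Δ : Matrix (Fin 3) (Fin 3) (LaurentPolynomial ℤ)) *
              (ψ τ : Matrix (Fin 3) (Fin 3) (LaurentPolynomial ℤ)) ^ 2)
          ≠ (1 : Matrix (Fin 3) (Fin 3) (LaurentPolynomial ℤ)) := by
  have hτm : (ψ τ : Matrix (Fin 3) (Fin 3) (LaurentPolynomial ℤ)) = Nmat := by
    rw [τ, map_mul, map_mul, Units.val_mul, Units.val_mul, h₁, h₂, h₃, hM123]
  have hθm : (ψ θ : Matrix (Fin 3) (Fin 3) (LaurentPolynomial ℤ))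
      = (T 4 : LaurentPolynomial ℤ) • (1 : Matrix (Fin 3) (Fin 3) (LaurentPolynomial ℤ)) := by
    rw [θ, map_pow, Units.val_pow_eq_pow_val, hτm, hN4]
  have hscal : ∀ c d : LaurentPolynomial ℤ,
      (c • (1 : Matrix (Fin 3) (Fin 3) (LaurentPolynomial ℤ)))
        * (d • (1 : Matrix (Fin 3) (Fin 3) (LaurentPolynomial ℤ)))
        = (c * d) • (1 : Matrix (Fin 3) (Fin 3) (LaurentPolynomial ℤ)) := by
    intro c d
    rw [smul_mul_smul_comm, one_mul]
  have hθinv : (((ψ θ)⁻¹ : Matrix.GeneralLinearGroup (Fin 3) (LaurentPolynomial ℤ)) :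
        Matrix (Fin 3) (Fin 3) (LaurentPolynomial ℤ))
      = (T (-4) : LaurentPolynomial ℤ) • (1 : Matrix (Fin 3) (Fin 3) (LaurentPolynomial ℤ)) := by
    refine Units.inv_eq_of_mul_eq_one_right ?_
    rw [hθm, hscal, ← T_add]
    norm_num
  have hθzpow : ∀ M : ℤ, ((ψ θ ^ M : _) : Matrix (Fin 3) (Fin 3) (LaurentPolynomial ℤ))
      = (T (4 * M) : LaurentPolynomial ℤ) • (1 : Matrix (Fin 3) (Fin 3) (LaurentPolynomial ℤ)) := by
    intro M
    induction M using Int.induction_on with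
    | zero => rw [zpow_zero, Units.val_one, mul_zero, T_zero, one_smul]
    | succ k ih =>
        rw [zpow_add_one, Units.val_mul, ih, hθm, hscal, ← T_add,
          show 4 * ((k:ℤ)) + 4 = 4 * ((k:ℤ) + 1) by ring]
    | pred k ih =>
        rw [zpow_sub_one, Units.val_mul, ih, hθinv, hscal, ← T_add,
          show 4 * (-(k:ℤ)) + -4 = 4 * (-(k:ℤ) - 1) by ring]
  have hgw : ∀ L : List ℕ, ((ψ (gword L) : _) : Matrix (Fin 3) (Fin 3) (LaurentPolynomial ℤ))
      = (L.map fun i =>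
          (ψ Δ : Matrix (Fin 3) (Fin 3) (LaurentPolynomial ℤ)) *
            (ψ τ : Matrix (Fin 3) (Fin 3) (LaurentPolynomial ℤ)) ^ i).prod := by
    intro L
    induction L with
    | nil => simp [gword_nil]
    | cons i L ih =>
        rw [gword_cons, map_mul, map_mul, map_pow, Units.val_mul, Units.val_mul,
          Units.val_pow_eq_pow_val, ih, List.map_cons, List.prod_cons]
  have hword : ∀ (M : ℤ) (L : List ℕ),
      ((ψ (θ ^ M * τ ^ 2 * gword L * Δ * τ ^ 2) : _) : Matrix (Fin 3) (Fin 3) (LaurentPolynomial ℤ))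
        = (T (4 * M) : LaurentPolynomial ℤ) •
            ((ψ τ : Matrix (Fin 3) (Fin 3) (LaurentPolynomial ℤ)) ^ 2 *
              (L.map fun i =>
                (ψ Δ : Matrix (Fin 3) (Fin 3) (LaurentPolynomial ℤ)) *
                  (ψ τ : Matrix (Fin 3) (Fin 3) (LaurentPolynomial ℤ)) ^ i).prod *
              (ψ Δ : Matrix (Fin 3) (Fin 3) (LaurentPolynomial ℤ)) *
              (ψ τ : Matrix (Fin 3) (Fin 3) (LaurentPolynomial ℤ)) ^ 2) := by
    intro M L
    rw [map_mul, map_mul, map_mul, map_mul, map_zpow, map_pow]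
    simp only [Units.val_mul, Units.val_pow_eq_pow_val, hθzpow, hgw]
    rw [smul_mul_assoc, smul_mul_assoc, smul_mul_assoc, smul_mul_assoc, one_mul]
  constructor
  · -- injective → condition
    intro hinj m l hl hne hmat
    apply hne
    apply hinj
    rw [map_one]
    refine Units.ext ?_
    show ((ψ (θ ^ m * τ ^ 2 * gword l * Δ * τ ^ 2) : _) : Matrix (Fin 3) (Fin 3) (LaurentPolynomial ℤ)) = 1
    rw [hword m l]
    exact hmat
  · -- condition → injective
    intro hcond
    refine (MonoidHom.ker_eq_bot_iff ψ).mp (eq_bot_iff.mpr fun g hg => ?_)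
    rw [Subgroup.mem_bot]
    by_contra hne
    have hψg : ψ g = 1 := hg
    have hsub : Subgroup.closure ({α, β} : Set B₄) ≤ Subgroup.closure ({τ, Δ} : Set B₄) := by
      rw [Subgroup.closure_le]
      rintro x (rfl | hx)
      · exact mem_τΔ_α
      · rw [Set.mem_singleton_iff] at hx; subst hx
        exact mem_τΔ_β
    have hgood : Good g := good_of_mem (hsub (hker hg))
    rcases endgame hgood with ⟨M, r, hr4, rfl⟩ | ⟨x, M, L, hE, hx⟩
    · -- g = θ^M * τ^r
      have hv : (T (4 * M) : LaurentPolynomial ℤ) • Nmat ^ r = 1 := by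
        have h0 : ((ψ (θ ^ M * τ ^ r) : _) : Matrix (Fin 3) (Fin 3) (LaurentPolynomial ℤ)) = 1 := by
          rw [hψg]; rfl
        rw [map_mul, map_zpow, map_pow, Units.val_mul, hθzpow,
          Units.val_pow_eq_pow_val, hτm, smul_mul_assoc, one_mul] at h0
        exact h0
      interval_cases r
      · -- r = 0
        have h00 := congrArg (fun A => A 0 0) hv
        simp only [pow_zero, Matrix.smul_apply, Matrix.one_apply_eq, smul_eq_mul, mul_one] at h00
        have hM0 : M = 0 := by have := T_eq_one h00; omega
        exact hne (by rw [hM0]; simp)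
      · have h00 := congrArg (fun A => A 0 0) hv
        simp only [pow_one, Matrix.smul_apply, hNd1, Matrix.one_apply_eq, smul_eq_mul,
          mul_zero] at h00
        exact one_ne_zero h00.symm
      · have h00 := congrArg (fun A => A 0 0) hv
        simp only [Matrix.smul_apply, hNd2, Matrix.one_apply_eq, smul_eq_mul, mul_zero] at h00
        exact one_ne_zero h00.symm
      · have h00 := congrArg (fun A => A 1 1) hv
        simp only [Matrix.smul_apply, hNd3, Matrix.one_apply_eq, smul_eq_mul, mul_zero] at h00
        exact one_ne_zero h00.symm
    · -- conjugate has the standard form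
      have hw1 : θ ^ M * τ ^ 2 * gword L * Δ * τ ^ 2 ≠ 1 := by
        rw [wordform_eq, ← hx]
        intro h
        apply hne
        have : g = x⁻¹ * (x * g * x⁻¹) * x := by group
        rw [this, h]
        group
      have hmat1 : ((ψ (θ ^ M * τ ^ 2 * gword L * Δ * τ ^ 2) : _) :
          Matrix (Fin 3) (Fin 3) (LaurentPolynomial ℤ)) = 1 := by
        rw [wordform_eq, ← hx, map_mul, map_mul, hψg, mul_one, ← map_mul, mul_inv_cancel,
          map_one]
        rfl
      exact hcond M L hE hw1 (by rw [← hword M L]; exact hmat1)
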